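/- Let a > 0, b > 0 be real numbers, set c = (1 + e^{a b})/e^{a b} and d = 1/(1 + e^{a b}), define U(P) = c·(1/(1 + e^{-a(P-b)}) − d), and let S(P) denote the derivative of P ↦ log U(P) at P. Let p > 0 and suppose P* > 0 satisfies S(P*) = p. Then P* is the unique maximizer over (0, ∞) of the user objective P ↦ log U(P) − p·P. -/

import Mathlib

open Real

noncomputable def Lfun (a E : ℝ) : ℝ → ℝ :=
  fun P => Real.log (1 - Real.exp (-(a*P))) - Real.log (1 + E * Real.exp (-(a*P)))

noncomputable def S0 (a E : ℝ) : ℝ → ℝ :=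
  fun P => a * Real.exp (-(a*P)) / (1 - Real.exp (-(a*P)))
    + a * E * Real.exp (-(a*P)) / (1 + E * Real.exp (-(a*P)))

lemma exp_lt_one' {a P : ℝ} (ha : 0 < a) (hP : 0 < P) : Real.exp (-(a*P)) < 1 := by
  rw [Real.exp_lt_one_iff]; nlinarith

lemma Lfun_hasDerivAt (a E : ℝ) (ha : 0 < a) (hE : 0 < E) {P : ℝ} (hP : 0 < P) :
    HasDerivAt (Lfun a E) (S0 a E P) P := by
  have hx1 : Real.exp (-(a*P)) < 1 := exp_lt_one' ha hP
  have hx0 : 0 < Real.exp (-(a*P)) := Real.exp_pos _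
  have hd : HasDerivAt (fun P : ℝ => -(a*P)) (-a) P := by
    exact (((hasDerivAt_id P).const_mul a).neg).congr_deriv (by ring)
  have hexp : HasDerivAt (fun P : ℝ => Real.exp (-(a*P))) (Real.exp (-(a*P)) * -a) P := hd.exp
  have h1 : HasDerivAt (fun P : ℝ => 1 - Real.exp (-(a*P))) (0 - Real.exp (-(a*P)) * -a) P :=
    (hasDerivAt_const P 1).sub hexp
  have h2 : HasDerivAt (fun P : ℝ => 1 + E * Real.exp (-(a*P))) (0 + E * (Real.exp (-(a*P)) * -a)) P :=
    (hasDerivAt_const P 1).add (hexp.const_mul E)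
  have hden1 : (1 : ℝ) - Real.exp (-(a*P)) ≠ 0 := by linarith
  have hden2 : (1 : ℝ) + E * Real.exp (-(a*P)) ≠ 0 := by nlinarith
  have := (h1.log hden1).sub (h2.log hden2)
  refine this.congr_deriv ?_
  unfold S0
  field_simp
  ring

lemma S0_strictAntiOn (a E : ℝ) (ha : 0 < a) (hE : 0 < E) :
    StrictAntiOn (S0 a E) (Set.Ioi 0) := by
  intro x hx y hy hxy
  simp only [Set.mem_Ioi] at hx hy
  set u := Real.exp (-(a*y)) with hu
  set v := Real.exp (-(a*x)) with hv
  have huv : u < v := Real.exp_lt_exp.2 (by nlinarith)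
  have hu0 : 0 < u := Real.exp_pos _
  have hv1 : v < 1 := exp_lt_one' ha hx
  have hv0 : 0 < v := Real.exp_pos _
  unfold S0
  have h1 : a * u / (1 - u) < a * v / (1 - v) := by
    rw [div_lt_div_iff₀ (by linarith) (by linarith)]
    nlinarith
  have h2 : a * E * u / (1 + E * u) < a * E * v / (1 + E * v) := by
    rw [div_lt_div_iff₀ (by nlinarith) (by nlinarith)]
    nlinarith [mul_lt_mul_of_pos_left huv (mul_pos ha hE)]
  linarith

theorem user_subproblem_unique_maximizer
    (a b c d : ℝ) (ha : 0 < a) (hb : 0 < b)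
    (hc : c = (1 + Real.exp (a * b)) / Real.exp (a * b))
    (hd : d = 1 / (1 + Real.exp (a * b)))
    (U : ℝ → ℝ)
    (hU : ∀ P : ℝ, U P = c * (1 / (1 + Real.exp (-a * (P - b))) - d))
    (S : ℝ → ℝ) (hS : ∀ P : ℝ, S P = deriv (fun P => Real.log (U P)) P)
    (p : ℝ) (hp : 0 < p)
    (Pstar : ℝ) (hPstar : 0 < Pstar) (hfoc : S Pstar = p) :
    (∀ Q : ℝ, 0 < Q →
        Real.log (U Q) - p * Q ≤ Real.log (U Pstar) - p * Pstar) ∧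
    (∀ Q : ℝ, 0 < Q →
        Real.log (U Q) - p * Q = Real.log (U Pstar) - p * Pstar → Q = Pstar) := by
  set E := Real.exp (a * b) with hE
  have hE0 : 0 < E := Real.exp_pos _
  -- closed form for U
  have hUclosed : ∀ P : ℝ, U P = (1 - Real.exp (-(a*P))) / (1 + E * Real.exp (-(a*P))) := by
    intro P
    have hsplit : Real.exp (-a * (P - b)) = E * Real.exp (-(a*P)) := by
      rw [hE, ← Real.exp_add]; ring_nf
    rw [hU, hc, hd, hsplit]
    have hx0 : 0 < Real.exp (-(a*P)) := Real.exp_pos _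
    have hden : (0:ℝ) < 1 + E * Real.exp (-(a*P)) := by nlinarith
    field_simp
    ring
  -- log U = Lfun on Ioi 0
  have hlog : ∀ P : ℝ, 0 < P → Real.log (U P) = Lfun a E P := by
    intro P hP
    have hx1 : Real.exp (-(a*P)) < 1 := exp_lt_one' ha hP
    have hx0 : 0 < Real.exp (-(a*P)) := Real.exp_pos _
    rw [hUclosed P, Lfun]
    rw [Real.log_div (by linarith) (by nlinarith)]
  -- S = S0 on Ioi 0
  have hSeq : ∀ P : ℝ, 0 < P → S P = S0 a E P := by
    intro P hP
    have heq : (fun Q => Real.log (U Q)) =ᶠ[nhds P] Lfun a E := by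
      filter_upwards [Ioi_mem_nhds hP] with Q hQ
      exact hlog Q hQ
    rw [hS, heq.deriv_eq, (Lfun_hasDerivAt a E ha hE0 hP).deriv]
  have hfoc' : S0 a E Pstar = p := by rw [← hSeq Pstar hPstar]; exact hfoc
  -- objective
  set F : ℝ → ℝ := fun Q => Lfun a E Q - p * Q with hF
  have hFderiv : ∀ Q : ℝ, 0 < Q → HasDerivAt F (S0 a E Q - p) Q := by
    intro Q hQ
    have : HasDerivAt (fun y => Lfun a E y - p * id y) (S0 a E Q - p * 1) Q := (Lfun_hasDerivAt a E ha hE0 hQ).sub ((hasDerivAt_id Q).const_mul p)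
    simpa [hF, mul_comm] using this
  have hderivF : ∀ Q : ℝ, 0 < Q → deriv F Q = S0 a E Q - p := fun Q hQ => (hFderiv Q hQ).deriv
  have hcont : ContinuousOn F (Set.Ioi 0) := fun x hx =>
    (hFderiv x hx).continuousAt.continuousWithinAt
  -- strict maximum
  have key : ∀ Q : ℝ, 0 < Q → Q ≠ Pstar → F Q < F Pstar := by
    intro Q hQ hne
    rcases lt_or_gt_of_ne hne with hlt | hgt
    · have hmono : StrictMonoOn F (Set.Icc Q Pstar) := by
        apply strictMonoOn_of_deriv_pos (convex_Icc _ _)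
          (hcont.mono (by intro x hx; exact lt_of_lt_of_le hQ hx.1))
        intro x hx
        rw [interior_Icc] at hx
        have hx0 : 0 < x := lt_trans hQ hx.1
        rw [hderivF x hx0]
        have := S0_strictAntiOn a E ha hE0 (Set.mem_Ioi.2 hx0) (Set.mem_Ioi.2 hPstar) hx.2
        linarith [hfoc' ▸ this]
      exact hmono (Set.left_mem_Icc.2 hlt.le) (Set.right_mem_Icc.2 hlt.le) hlt
    · have hanti : StrictAntiOn F (Set.Icc Pstar Q) := by
        apply strictAntiOn_of_deriv_neg (convex_Icc _ _)
          (hcont.mono (by intro x hx; exact lt_of_lt_of_le hPstar hx.1))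
        intro x hx
        rw [interior_Icc] at hx
        have hx0 : 0 < x := lt_trans hPstar hx.1
        rw [hderivF x hx0]
        have := S0_strictAntiOn a E ha hE0 (Set.mem_Ioi.2 hPstar) (Set.mem_Ioi.2 hx0) hx.1
        linarith [hfoc' ▸ this]
      exact hanti (Set.left_mem_Icc.2 hgt.le) (Set.right_mem_Icc.2 hgt.le) hgt
  constructor
  · intro Q hQ
    rw [hlog Q hQ, hlog Pstar hPstar]
    by_cases h : Q = Pstar
    · rw [h]
    · exact (key Q hQ h).le
  · intro Q hQ heq
    by_contra h
    have := key Q hQ h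
    rw [hlog Q hQ, hlog Pstar hPstar] at heq
    simp only [hF] at this
    linarith
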